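/- Let K be a compact linearly ordered topological space and let G : K → ℝ be a regulated function. Then G is a uniform limit of step functions, and in particular G is Borel measurable. -/

import Mathlib

open Filter Topology

/-- A step function on a compact line `K` with minimum `⊥` and maximum `⊤`. -/
def IsStepFunction {K : Type*} [LinearOrder K] [OrderBot K] [OrderTop K]
    (S : K → ℝ) : Prop :=
  ∃ (n : ℕ) (s : Fin (n + 1) → K), Monotone s ∧ s 0 = ⊥ ∧ s (Fin.last n) = ⊤ ∧
    ∀ i : Fin n, ∀ x ∈ Set.Ioo (s i.castSucc) (s i.succ),
      ∀ y ∈ Set.Ioo (s i.castSucc) (s i.succ), S x = S y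

/-- `G : K → ℝ` is regulated: left limits exist at left-dense points, and `G` is
right-continuous at right-dense points. -/
def Regulated {K : Type*} [LinearOrder K] [TopologicalSpace K] (G : K → ℝ) : Prop :=
  (∀ x : K, (𝓝[<] x).NeBot → ∃ l : ℝ, Filter.Tendsto G (𝓝[<] x) (𝓝 l)) ∧
  (∀ x : K, (𝓝[>] x).NeBot → Filter.Tendsto G (𝓝[>] x) (𝓝 (G x)))

open Set

section Aux

variable {K : Type*} [LinearOrder K] [OrderBot K] [OrderTop K]

/-- A point not of the form `s j` lies in one of the open intervals of the division. -/
lemma mem_Ioo_of_not_mem_range {n : ℕ} {s : Fin (n + 1) → K} (hm : Monotone s)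
    (h0 : s 0 = ⊥) (hl : s (Fin.last n) = ⊤) {x : K} (hx : x ∉ Set.range s) :
    ∃ i : Fin n, x ∈ Set.Ioo (s i.castSucc) (s i.succ) := by
  classical
  have hJne : (Finset.univ.filter (fun j : Fin (n + 1) => s j < x)).Nonempty := by
    refine ⟨0, ?_⟩
    simp only [Finset.mem_filter, Finset.mem_univ, true_and, h0]
    exact lt_of_le_of_ne bot_le (fun h => hx ⟨0, by rw [h0, h]⟩)
  set j := (Finset.univ.filter (fun j : Fin (n + 1) => s j < x)).max' hJne with hjdef
  have hj : s j < x := by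
    have := (Finset.univ.filter (fun j : Fin (n + 1) => s j < x)).max'_mem hJne
    simpa using this
  have hjne : (j : ℕ) < n := by
    rcases lt_or_eq_of_le (Nat.lt_succ_iff.mp j.isLt) with h | h
    · exact h
    · exfalso
      have : j = Fin.last n := Fin.ext h
      rw [this, hl] at hj
      exact not_top_lt hj
  refine ⟨⟨(j : ℕ), hjne⟩, ?_, ?_⟩
  · have : (⟨(j : ℕ), hjne⟩ : Fin n).castSucc = j := by
      apply Fin.ext; simp
    rw [this]; exact hj
  · by_contra hcon
    push_neg at hcon
    have hne : s (⟨(j : ℕ), hjne⟩ : Fin n).succ ≠ x :=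
      fun h => hx ⟨_, h⟩
    have hlt : s (⟨(j : ℕ), hjne⟩ : Fin n).succ < x := lt_of_le_of_ne hcon hne
    have hmem : (⟨(j : ℕ), hjne⟩ : Fin n).succ ∈
        Finset.univ.filter (fun j : Fin (n + 1) => s j < x) := by
      simp only [Finset.mem_filter, Finset.mem_univ, true_and]
      exact hlt
    have := Finset.le_max' _ _ hmem
    rw [← hjdef] at this
    have : ((⟨(j : ℕ), hjne⟩ : Fin n).succ : ℕ) ≤ (j : ℕ) := this
    simp at this

end Aux

/-- A step function is measurable. -/
lemma IsStepFunction.measurable {K : Type*} [LinearOrder K] [TopologicalSpace K]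
    [OrderTopology K] [OrderBot K] [OrderTop K] [MeasurableSpace K] [BorelSpace K]
    {S : K → ℝ} (h : IsStepFunction S) : Measurable S := by
  classical
  obtain ⟨n, s, hm, h0, hl, hc⟩ := h
  intro B hB
  have key : S ⁻¹' B =
      (⋃ i : Fin n, S ⁻¹' B ∩ Ioo (s i.castSucc) (s i.succ)) ∪ (S ⁻¹' B ∩ Set.range s) := by
    ext x
    constructor
    · intro hx
      by_cases hr : x ∈ Set.range s
      · exact Or.inr ⟨hx, hr⟩
      · obtain ⟨i, hi⟩ := mem_Ioo_of_not_mem_range hm h0 hl hr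
        exact Or.inl (Set.mem_iUnion.mpr ⟨i, hx, hi⟩)
    · rintro (hx | hx)
      · obtain ⟨i, hxi, _⟩ := Set.mem_iUnion.mp hx
        exact hxi
      · exact hx.1
  rw [key]
  apply MeasurableSet.union
  · apply MeasurableSet.iUnion
    intro i
    by_cases hne : ∃ z ∈ Ioo (s i.castSucc) (s i.succ), S z ∈ B
    · obtain ⟨z, hz, hzB⟩ := hne
      have : S ⁻¹' B ∩ Ioo (s i.castSucc) (s i.succ) = Ioo (s i.castSucc) (s i.succ) := by
        ext w
        refine ⟨fun hw => hw.2, fun hw => ⟨?_, hw⟩⟩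
        have : S w = S z := hc i w hw z hz
        rw [Set.mem_preimage, this]; exact hzB
      rw [this]; exact measurableSet_Ioo
    · push_neg at hne
      have : S ⁻¹' B ∩ Ioo (s i.castSucc) (s i.succ) = ∅ := by
        ext w
        simp only [Set.mem_inter_iff, Set.mem_preimage, Set.mem_empty_iff_false, iff_false,
          not_and]
        exact fun hw hw2 => hne w hw2 hw
      rw [this]; exact MeasurableSet.empty
  · exact (Set.Finite.inter_of_right (Set.finite_range s) _).measurableSet

/-- Key approximation lemma: a regulated function is within `ε` of a step function. -/
lemma exists_step_approx {K : Type*} [LinearOrder K] [TopologicalSpace K] [OrderTopology K]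
    [CompactSpace K] [Nonempty K] [OrderBot K] [OrderTop K]
    (G : K → ℝ) (hG : Regulated G) {ε : ℝ} (hε : 0 < ε) :
    ∃ S : K → ℝ, IsStepFunction S ∧ ∀ x, |S x - G x| ≤ ε := by
  classical
  -- left oscillation control
  have hL : ∀ x : K, ⊥ < x → ∃ a < x, ∀ u ∈ Ioo a x, ∀ v ∈ Ioo a x, |G u - G v| ≤ ε := by
    intro x hx
    by_cases hne : (𝓝[<] x).NeBot
    · obtain ⟨l, hl⟩ := hG.1 x hne
      have hev : ∀ᶠ t in 𝓝[<] x, G t ∈ Metric.closedBall l (ε / 2) :=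
        hl (Metric.closedBall_mem_nhds l (half_pos hε))
      obtain ⟨a, ha, hsub⟩ := (nhdsLT_basis_of_exists_lt ⟨⊥, hx⟩).mem_iff.mp hev
      refine ⟨a, ha, fun u hu v hv => ?_⟩
      have h1 : |G u - l| ≤ ε / 2 := by
        have := hsub hu; simpa [Metric.mem_closedBall, Real.dist_eq] using this
      have h2 : |G v - l| ≤ ε / 2 := by
        have := hsub hv; simpa [Metric.mem_closedBall, Real.dist_eq] using this
      calc |G u - G v| ≤ |G u - l| + |l - G v| := abs_sub_le _ _ _
        _ = |G u - l| + |G v - l| := by rw [abs_sub_comm l (G v)]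
        _ ≤ ε / 2 + ε / 2 := add_le_add h1 h2
        _ = ε := by ring
    · rw [not_neBot] at hne
      have hempty : (∅ : Set K) ∈ 𝓝[<] x := by rw [hne]; exact Filter.mem_bot
      obtain ⟨a, ha, hsub⟩ := (nhdsLT_basis_of_exists_lt ⟨⊥, hx⟩).mem_iff.mp hempty
      exact ⟨a, ha, fun u hu => absurd (hsub hu) (Set.notMem_empty u)⟩
  -- right oscillation control
  have hR : ∀ x : K, x < ⊤ → ∃ b, x < b ∧ ∀ u ∈ Ioo x b, ∀ v ∈ Ioo x b, |G u - G v| ≤ ε := by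
    intro x hx
    by_cases hne : (𝓝[>] x).NeBot
    · have hl := hG.2 x hne
      have hev : ∀ᶠ t in 𝓝[>] x, G t ∈ Metric.closedBall (G x) (ε / 2) :=
        hl (Metric.closedBall_mem_nhds (G x) (half_pos hε))
      obtain ⟨b, hb, hsub⟩ := (nhdsGT_basis_of_exists_gt ⟨⊤, hx⟩).mem_iff.mp hev
      refine ⟨b, hb, fun u hu v hv => ?_⟩
      have h1 : |G u - G x| ≤ ε / 2 := by
        have := hsub hu; simpa [Metric.mem_closedBall, Real.dist_eq] using this
      have h2 : |G v - G x| ≤ ε / 2 := by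
        have := hsub hv; simpa [Metric.mem_closedBall, Real.dist_eq] using this
      calc |G u - G v| ≤ |G u - G x| + |G x - G v| := abs_sub_le _ _ _
        _ = |G u - G x| + |G v - G x| := by rw [abs_sub_comm (G x) (G v)]
        _ ≤ ε / 2 + ε / 2 := add_le_add h1 h2
        _ = ε := by ring
    · rw [not_neBot] at hne
      have hempty : (∅ : Set K) ∈ 𝓝[>] x := by rw [hne]; exact Filter.mem_bot
      obtain ⟨b, hb, hsub⟩ := (nhdsGT_basis_of_exists_gt ⟨⊤, hx⟩).mem_iff.mp hempty
      exact ⟨b, hb, fun u hu => absurd (hsub hu) (Set.notMem_empty u)⟩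
  choose aa haa1 haa2 using hL
  choose bb hbb1 hbb2 using hR
  -- totalized endpoints
  set a' : K → K := fun x => if h : ⊥ < x then aa x h else x with ha'def
  set b' : K → K := fun x => if h : x < ⊤ then bb x h else x with hb'def
  have ha2 : ∀ x, ∀ u ∈ Ioo (a' x) x, ∀ v ∈ Ioo (a' x) x, |G u - G v| ≤ ε := by
    intro x
    rw [ha'def]
    by_cases h : ⊥ < x
    · simpa [h] using haa2 x h
    · simp only [h, dif_neg, not_false_iff]
      intro u hu
      exact absurd hu.2 (not_lt.mpr hu.1.le)
  have hb2 : ∀ x, ∀ u ∈ Ioo x (b' x), ∀ v ∈ Ioo x (b' x), |G u - G v| ≤ ε := by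
    intro x
    rw [hb'def]
    by_cases h : x < ⊤
    · simpa [h] using hbb2 x h
    · simp only [h, dif_neg, not_false_iff]
      intro u hu
      exact absurd hu.2 (not_lt.mpr hu.1.le)
  -- the open cover
  set U : K → Set K :=
    fun x => (if ⊥ < x then Ioi (a' x) else univ) ∩ (if x < ⊤ then Iio (b' x) else univ)
      with hUdef
  have hUopen : ∀ x, IsOpen (U x) := by
    intro x
    apply IsOpen.inter <;> split
    · exact isOpen_Ioi
    · exact isOpen_univ
    · exact isOpen_Iio
    · exact isOpen_univ
  have hxU : ∀ x, x ∈ U x := by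
    intro x
    constructor <;> split
    · next h => simp only [ha'def, Set.mem_Ioi, dif_pos h]; exact haa1 x h
    · exact Set.mem_univ x
    · next h => simp only [hb'def, Set.mem_Iio, dif_pos h]; exact hbb1 x h
    · exact Set.mem_univ x
  obtain ⟨t, ht⟩ := isCompact_univ.elim_nhds_subcover U (fun x _ => (hUopen x).mem_nhds (hxU x))
  replace ht := ht.2
  -- finite set of partition points
  set T : Finset K := insert ⊥ (insert ⊤ (t.biUnion fun x => {a' x, x, b' x})) with hTdef
  have hbotT : (⊥ : K) ∈ T := by simp [hTdef]
  have htopT : (⊤ : K) ∈ T := by simp [hTdef]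
  have hmemT : ∀ x ∈ t, a' x ∈ T ∧ x ∈ T ∧ b' x ∈ T := by
    intro x hx
    refine ⟨?_, ?_, ?_⟩ <;>
      · simp only [hTdef, Finset.mem_insert, Finset.mem_biUnion]
        right; right
        exact ⟨x, hx, by simp⟩
  -- the key oscillation claim between consecutive partition points
  have claim : ∀ p q : K, (∀ r ∈ T, r ≤ p ∨ q ≤ r) →
      ∀ z ∈ Ioo p q, ∀ z' ∈ Ioo p q, |G z - G z'| ≤ ε := by
    intro p q hpq z hz z' hz'
    have hzU := ht (Set.mem_univ z)
    simp only [Set.mem_iUnion] at hzU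
    obtain ⟨x, hxt, hzUx⟩ := hzU
    obtain ⟨hax, hxT, hbx⟩ := hmemT x hxt
    have hz1 : ⊥ < x → a' x < z := by
      intro h; have := hzUx.1; rw [if_pos h] at this; exact this
    have hz2 : x < ⊤ → z < b' x := by
      intro h; have := hzUx.2; rw [if_pos h] at this; exact this
    rcases hpq x hxT with hxp | hqx
    · -- x ≤ p : use the right interval (x, b' x)
      have hxz : x < z := lt_of_le_of_lt hxp hz.1
      have hxt' : x < ⊤ := lt_of_lt_of_le hxz le_top
      have hzb : z < b' x := hz2 hxt'
      rcases hpq (b' x) hbx with hbp | hqb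
      · exact absurd (lt_of_lt_of_le hzb hbp) (not_lt.mpr hz.1.le)
      · exact hb2 x z ⟨hxz, hzb⟩ z' ⟨lt_of_le_of_lt hxp hz'.1, lt_of_lt_of_le hz'.2 hqb⟩
    · -- q ≤ x : use the left interval (a' x, x)
      have hzx : z < x := lt_of_lt_of_le hz.2 hqx
      have hbx' : ⊥ < x := lt_of_le_of_lt bot_le hzx
      have haz : a' x < z := hz1 hbx'
      rcases hpq (a' x) hax with hap | hqa
      · exact ha2 x z ⟨haz, hzx⟩ z' ⟨lt_of_le_of_lt hap hz'.1, lt_of_lt_of_le hz'.2 hqx⟩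
      · exact absurd (lt_of_le_of_lt hqa haz) (not_lt.mpr hz.2.le)
  -- build the monotone enumeration of T
  have hTne : T.Nonempty := ⟨⊥, hbotT⟩
  set n : ℕ := T.card - 1 with hndef
  have hcard : T.card = n + 1 := (Nat.succ_pred_eq_of_pos (Finset.card_pos.mpr hTne)).symm
  set e := T.orderIsoOfFin hcard with hedef
  set s : Fin (n + 1) → K := fun i => (e i : K) with hsdef
  have hmono : Monotone s := fun i j hij => Subtype.coe_le_coe.mpr (e.monotone hij)
  have hsurj : ∀ r ∈ T, ∃ j, s j = r := by
    intro r hr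
    refine ⟨e.symm ⟨r, hr⟩, ?_⟩
    simp [hsdef]
  have hmemTs : ∀ j, s j ∈ T := fun j => (e j).2
  have h0 : s 0 = ⊥ := by
    obtain ⟨j, hj⟩ := hsurj ⊥ hbotT
    exact le_antisymm (hj ▸ hmono (Fin.zero_le j)) bot_le
  have hlast : s (Fin.last n) = ⊤ := by
    obtain ⟨j, hj⟩ := hsurj ⊤ htopT
    exact le_antisymm le_top (hj ▸ hmono (Fin.le_last j))
  have hconsec : ∀ i : Fin n, ∀ r ∈ T, r ≤ s i.castSucc ∨ s i.succ ≤ r := by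
    intro i r hr
    obtain ⟨j, rfl⟩ := hsurj r hr
    rcases le_or_gt j i.castSucc with h | h
    · exact Or.inl (hmono h)
    · exact Or.inr (hmono (Fin.castSucc_lt_iff_succ_le.mp h))
  -- uniqueness of the interval containing a point
  have huniq : ∀ (i j : Fin n) (x : K), x ∈ Ioo (s i.castSucc) (s i.succ) →
      x ∈ Ioo (s j.castSucc) (s j.succ) → i = j := by
    intro i j x hxi hxj
    by_contra hne
    rcases lt_or_gt_of_ne hne with h | h
    · have hle : i.succ ≤ j.castSucc := by
        rw [Fin.le_def]
        simp only [Fin.val_succ, Fin.coe_castSucc]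
        exact Fin.lt_def.mp h
      exact absurd (lt_of_lt_of_le hxi.2 (hmono hle)) (not_lt.mpr hxj.1.le)
    · have hle : j.succ ≤ i.castSucc := by
        rw [Fin.le_def]
        simp only [Fin.val_succ, Fin.coe_castSucc]
        exact Fin.lt_def.mp h
      exact absurd (lt_of_lt_of_le hxj.2 (hmono hle)) (not_lt.mpr hxi.1.le)
  -- choose a point in each nonempty interval
  set pt : Fin n → K := fun i =>
    if h : (Ioo (s i.castSucc) (s i.succ)).Nonempty then h.choose else ⊥ with hptdef
  have hpt : ∀ i x, x ∈ Ioo (s i.castSucc) (s i.succ) → pt i ∈ Ioo (s i.castSucc) (s i.succ) := by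
    intro i x hx
    rw [hptdef]
    simp only
    rw [dif_pos ⟨x, hx⟩]
    exact (⟨x, hx⟩ : (Ioo (s i.castSucc) (s i.succ)).Nonempty).choose_spec
  -- the step function
  set S : K → ℝ := fun x =>
    if h : ∃ i : Fin n, x ∈ Ioo (s i.castSucc) (s i.succ) then G (pt h.choose) else G x
    with hSdef
  have hSinterval : ∀ (i : Fin n) (x : K), x ∈ Ioo (s i.castSucc) (s i.succ) →
      S x = G (pt i) := by
    intro i x hx
    rw [hSdef]
    simp only
    rw [dif_pos ⟨i, hx⟩]
    congr 1
    have hch := (⟨i, hx⟩ : ∃ i : Fin n, x ∈ Ioo (s i.castSucc) (s i.succ)).choose_spec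
    rw [huniq _ i x hch hx]
  refine ⟨S, ⟨n, s, hmono, h0, hlast, ?_⟩, ?_⟩
  · intro i x hx y hy
    rw [hSinterval i x hx, hSinterval i y hy]
  · intro x
    by_cases h : ∃ i : Fin n, x ∈ Ioo (s i.castSucc) (s i.succ)
    · obtain ⟨i, hxi⟩ := h
      rw [hSinterval i x hxi]
      exact claim (s i.castSucc) (s i.succ) (hconsec i) (pt i) (hpt i x hxi) x hxi
    · have : S x = G x := by rw [hSdef]; simp only; rw [dif_neg h]
      rw [this, sub_self, abs_zero]
      exact hε.le

/-- A regulated function on a compact line is the uniform limit of step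
functions; in particular it is Borel measurable. -/
theorem stmt3 {K : Type*} [LinearOrder K] [TopologicalSpace K] [OrderTopology K]
    [CompactSpace K] [Nonempty K] [OrderBot K] [OrderTop K]
    [MeasurableSpace K] [BorelSpace K]
    (G : K → ℝ) (hG : Regulated G) :
    (∃ F : ℕ → K → ℝ, (∀ n, IsStepFunction (F n)) ∧
      TendstoUniformly F G Filter.atTop) ∧ Measurable G := by
  have key : ∀ n : ℕ, ∃ S : K → ℝ, IsStepFunction S ∧ ∀ x, |S x - G x| ≤ 1 / (n + 1) := by
    intro n
    exact exists_step_approx G hG (by positivity)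
  choose F hF1 hF2 using key
  have htu : TendstoUniformly F G Filter.atTop := by
    rw [Metric.tendstoUniformly_iff]
    intro δ hδ
    obtain ⟨N, hN⟩ := exists_nat_one_div_lt hδ
    filter_upwards [Filter.eventually_ge_atTop N] with n hn x
    have h1 : |F n x - G x| ≤ 1 / (n + 1) := hF2 n x
    have h2 : (1 : ℝ) / (n + 1) ≤ 1 / (N + 1) := by
      apply one_div_le_one_div_of_le
      · positivity
      · exact_mod_cast Nat.succ_le_succ hn
    rw [Real.dist_eq, abs_sub_comm]
    exact lt_of_le_of_lt (le_trans h1 h2) hN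
  refine ⟨⟨F, hF1, htu⟩, ?_⟩
  apply measurable_of_tendsto_metrizable (fun n => (hF1 n).measurable)
  exact tendsto_pi_nhds.2 fun x => htu.tendsto_at x
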